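/- Let y₀ ∈ ℝ, b > 0, and let p : ℝ → ℝ be continuous, strictly positive, strictly decreasing and strictly convex on [y₀, ∞). Suppose Y ≥ y₀ satisfies ∫_{y₀}^{Y} p(y) dy = b. If h > 0 and natural numbers n₁ < n₂ with n₁ ≥ 1 satisfy S_t(h,n₁) ≤ b ≤ S_l(h,n₂), then y₀ + h·n₁ < Y < y₀ + h·n₂. -/

import Mathlib

open Set Finset

/-- Lower rectangular sum: S_l(h,N) = ∑_{i=1}^{N} h·p(y₀ + i·h). -/
noncomputable def lowerSum (p : ℝ → ℝ) (y₀ h : ℝ) (N : ℕ) : ℝ :=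
  ∑ i ∈ Finset.Icc 1 N, h * p (y₀ + (i : ℝ) * h)

/-- Trapezoidal sum: S_t(h,N) = ∑_{i=1}^{N} (h/2)·(p(y₀+(i−1)·h) + p(y₀+i·h)). -/
noncomputable def trapSum (p : ℝ → ℝ) (y₀ h : ℝ) (N : ℕ) : ℝ :=
  ∑ i ∈ Finset.Icc 1 N, (h / 2) * (p (y₀ + ((i : ℝ) - 1) * h) + p (y₀ + (i : ℝ) * h))

private lemma sum_Icc_one_eq (f : ℕ → ℝ) (N : ℕ) :
    ∑ i ∈ Finset.Icc 1 N, f i = ∑ i ∈ Finset.range N, f (i + 1) := by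
  induction N with
  | zero => simp
  | succ n ih => rw [Finset.sum_Icc_succ_top (by omega), ih, Finset.sum_range_succ]

private lemma rect_lt (p : ℝ → ℝ) (y₀ : ℝ) (hc : ContinuousOn p (Set.Ici y₀))
    (hanti : StrictAntiOn p (Set.Ici y₀)) (h : ℝ) (hh : 0 < h)
    (a : ℝ) (ha : y₀ ≤ a) :
    h * p (a + h) < ∫ y in a..(a + h), p y := by
  have hsub : Set.Icc a (a + h) ⊆ Set.Ici y₀ := fun x hx => le_trans ha hx.1
  have hint : IntervalIntegrable p MeasureTheory.volume a (a + h) :=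
    (hc.mono hsub).intervalIntegrable_of_Icc (by linarith)
  have hintc : IntervalIntegrable (fun _ : ℝ => p (a + h)) MeasureTheory.volume a (a + h) :=
    intervalIntegrable_const
  have hp := intervalIntegral.intervalIntegral_pos_of_pos_on
    (f := fun y => p y - p (a + h)) (hint.sub hintc)
    (fun x hx => sub_pos.2 (hanti (hsub ⟨hx.1.le, hx.2.le⟩)
      (by simp only [Set.mem_Ici]; linarith) hx.2))
    (by linarith)
  rw [intervalIntegral.integral_sub hint hintc, intervalIntegral.integral_const] at hp
  have e : (a + h - a) • p (a + h) = h * p (a + h) := by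
    rw [smul_eq_mul]; ring
  rw [e] at hp
  linarith

private lemma trap_lt (p : ℝ → ℝ) (y₀ : ℝ) (hc : ContinuousOn p (Set.Ici y₀))
    (hconv : StrictConvexOn ℝ (Set.Ici y₀) p) (h : ℝ) (hh : 0 < h)
    (a : ℝ) (ha : y₀ ≤ a) :
    (∫ y in a..(a + h), p y) < h / 2 * (p a + p (a + h)) := by
  set m : ℝ := (p (a + h) - p a) / h with hm
  have hsub : Set.Icc a (a + h) ⊆ Set.Ici y₀ := fun x hx => le_trans ha hx.1
  have hint : IntervalIntegrable p MeasureTheory.volume a (a + h) :=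
    (hc.mono hsub).intervalIntegrable_of_Icc (by linarith)
  have hintL : IntervalIntegrable (fun y => p a + m * (y - a)) MeasureTheory.volume a (a + h) :=
    (Continuous.intervalIntegrable (by continuity) a (a + h))
  have hLlt : ∀ x ∈ Set.Ioo a (a + h), 0 < (p a + m * (x - a)) - p x := by
    intro x hx
    have ht1 : (0:ℝ) < (a + h - x) / h := by
      apply div_pos <;> [linarith [hx.2]; exact hh]
    have ht2 : (0:ℝ) < (x - a) / h := by
      apply div_pos <;> [linarith [hx.1]; exact hh]
    have hsum : (a + h - x) / h + (x - a) / h = 1 := by field_simp; ring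
    have hne : a ≠ a + h := by intro hcon; linarith
    have hkey := hconv.2 (Set.mem_Ici.2 ha) (Set.mem_Ici.2 (by linarith : y₀ ≤ a + h))
      hne ht1 ht2 hsum
    have e1 : ((a + h - x) / h) • a + ((x - a) / h) • (a + h) = x := by
      simp only [smul_eq_mul]; field_simp; ring
    have e2 : ((a + h - x) / h) • p a + ((x - a) / h) • p (a + h)
        = p a + m * (x - a) := by
      simp only [smul_eq_mul, hm]; field_simp; ring
    rw [e1, e2] at hkey
    linarith
  have hp := intervalIntegral.intervalIntegral_pos_of_pos_on
    (hintL.sub hint) hLlt (by linarith)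
  rw [intervalIntegral.integral_sub hintL hint] at hp
  have hL : (∫ y in a..(a + h), (p a + m * (y - a))) = h / 2 * (p a + p (a + h)) := by
    have e : (fun y => p a + m * (y - a)) = fun y => (p a - m * a) + m * y := by
      funext y; ring
    rw [e, intervalIntegral.integral_add intervalIntegrable_const
      (Continuous.intervalIntegrable (by continuity) a (a + h)),
      intervalIntegral.integral_const, intervalIntegral.integral_const_mul, integral_id,
      smul_eq_mul, hm]
    field_simp
    ring
  rw [hL] at hp
  linarith

private lemma tel_integral (p : ℝ → ℝ) (y₀ : ℝ) (hc : ContinuousOn p (Set.Ici y₀))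
    (h : ℝ) (hh : 0 < h) (N : ℕ) :
    (∫ y in y₀..(y₀ + h * N), p y)
      = ∑ i ∈ Finset.range N, ∫ y in (y₀ + h * i)..(y₀ + h * (i + 1 : ℕ)), p y := by
  have key := intervalIntegral.sum_integral_adjacent_intervals
    (a := fun i : ℕ => y₀ + h * i) (μ := MeasureTheory.volume) (f := p) (n := N) ?_
  · simpa using key.symm
  · intro k _
    apply (hc.mono ?_).intervalIntegrable_of_Icc
    · have : (0:ℝ) ≤ h * k := by positivity
      push_cast; linarith
    · intro x hx
      have : (0:ℝ) ≤ h * k := by positivity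
      exact le_trans (show y₀ ≤ y₀ + h * (k:ℝ) by linarith) hx.1

theorem stmt_2 (y₀ b : ℝ) (hb : 0 < b) (p : ℝ → ℝ)
    (hc : ContinuousOn p (Set.Ici y₀))
    (hpos : ∀ y ∈ Set.Ici y₀, 0 < p y)
    (hanti : StrictAntiOn p (Set.Ici y₀))
    (hconv : StrictConvexOn ℝ (Set.Ici y₀) p)
    (Y : ℝ) (hY : y₀ ≤ Y) (hint : (∫ y in y₀..Y, p y) = b)
    (h : ℝ) (hh : 0 < h) (n₁ n₂ : ℕ) (hn₁ : 1 ≤ n₁) (hlt : n₁ < n₂)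
    (ht : trapSum p y₀ h n₁ ≤ b) (hl : b ≤ lowerSum p y₀ h n₂) :
    y₀ + h * (n₁ : ℝ) < Y ∧ Y < y₀ + h * (n₂ : ℝ) := by
  -- lower sum is strictly below the integral up to y₀ + h n₂
  have hlow : lowerSum p y₀ h n₂ < ∫ y in y₀..(y₀ + h * n₂), p y := by
    rw [tel_integral p y₀ hc h hh n₂, lowerSum, sum_Icc_one_eq]
    apply Finset.sum_lt_sum_of_nonempty
    · exact Finset.nonempty_range_iff.2 (by omega)
    · intro i _
      have := rect_lt p y₀ hc hanti h hh (y₀ + h * i) (by nlinarith [hh.le, Nat.cast_nonneg (α := ℝ) i])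
      have e1 : (y₀ + h * i) + h = y₀ + ((i : ℝ) + 1) * h := by ring
      have e2 : y₀ + h * ((i + 1 : ℕ) : ℝ) = (y₀ + h * i) + h := by push_cast; ring
      rw [e1] at this
      rw [e2]
      calc h * p (y₀ + ((i + 1 : ℕ) : ℝ) * h) = h * p (y₀ + ((i:ℝ) + 1) * h) := by push_cast; ring_nf
        _ < _ := by
            rw [e1.symm] at this ⊢
            exact this
  -- trapezoidal sum is strictly above the integral up to y₀ + h n₁
  have htrap : (∫ y in y₀..(y₀ + h * n₁), p y) < trapSum p y₀ h n₁ := by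
    rw [tel_integral p y₀ hc h hh n₁, trapSum, sum_Icc_one_eq]
    apply Finset.sum_lt_sum_of_nonempty
    · exact Finset.nonempty_range_iff.2 (by omega)
    · intro i _
      have := trap_lt p y₀ hc hconv h hh (y₀ + h * i) (by nlinarith [hh.le, Nat.cast_nonneg (α := ℝ) i])
      have e2 : y₀ + h * ((i + 1 : ℕ) : ℝ) = (y₀ + h * i) + h := by push_cast; ring
      rw [e2]
      have e3 : y₀ + (((i + 1 : ℕ) : ℝ) - 1) * h = y₀ + h * i := by push_cast; ring
      have e4 : y₀ + ((i + 1 : ℕ) : ℝ) * h = (y₀ + h * i) + h := by push_cast; ring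
      rw [e3, e4]
      exact this
  have key1 : (∫ y in y₀..(y₀ + h * n₁), p y) < b := lt_of_lt_of_le htrap ht
  have key2 : b < ∫ y in y₀..(y₀ + h * n₂), p y := lt_of_le_of_lt hl hlow
  have integ : ∀ c d : ℝ, y₀ ≤ c → c ≤ d → IntervalIntegrable p MeasureTheory.volume c d := by
    intro c d hcd hdd
    exact (hc.mono (fun x hx => le_trans hcd hx.1)).intervalIntegrable_of_Icc hdd
  constructor
  · by_contra hcon
    push_neg at hcon
    have hsplit := intervalIntegral.integral_add_adjacent_intervals
      (integ y₀ Y le_rfl hY) (integ Y (y₀ + h * n₁) hY hcon)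
    have hnn : 0 ≤ ∫ y in Y..(y₀ + h * n₁), p y :=
      intervalIntegral.integral_nonneg hcon (fun u hu => (hpos u (le_trans hY hu.1)).le)
    rw [hint] at hsplit
    linarith
  · by_contra hcon
    push_neg at hcon
    have hX₂ : y₀ ≤ y₀ + h * n₂ := by nlinarith [hh.le, Nat.cast_nonneg (α := ℝ) n₂]
    have hsplit := intervalIntegral.integral_add_adjacent_intervals
      (integ y₀ (y₀ + h * n₂) le_rfl hX₂) (integ (y₀ + h * n₂) Y hX₂ hcon)
    have hnn : 0 ≤ ∫ y in (y₀ + h * n₂)..Y, p y :=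
      intervalIntegral.integral_nonneg hcon (fun u hu => (hpos u (le_trans hX₂ hu.1)).le)
    rw [hint] at hsplit
    linarith
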